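/- (Interchange lemma) Let Σ be a finite alphabet and let L ⊆ Σ* be a context-free language. Then there is an integer c > 0 such that for all integers n ≥ 2, all subsets R ⊆ L ∩ Σ^n, and all integers m with 2 ≤ m ≤ n, there exists a subset Z = {z_1,...,z_k} ⊆ R with k ≥ |R|/(c(n+1)²) and decompositions z_i = w_i x_i y_i for 1 ≤ i ≤ k such that for all 1 ≤ i, j ≤ k: (a) |w_i| = |w_j|, (b) |y_i| = |y_j|, (c) m/2 < |x_i| = |x_j| ≤ m, and (d) w_i x_j y_i ∈ L. -/

import Mathlib

open ContextFreeGrammar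

namespace InterchangeAux

variable {T : Type} {g : ContextFreeGrammar.{0} T}

lemma rewrites_mem_nonterminal {N : Type} {r : ContextFreeRule T N} {u v : List (Symbol T N)}
    (h : r.Rewrites u v) : Symbol.nonterminal r.input ∈ u := by
  induction h with
  | head s => exact List.mem_cons_self
  | cons x _ ih => exact List.mem_cons_of_mem _ ih

lemma not_produces_terminal {z : List T} {v : List (Symbol T g.NT)} :
    ¬ g.Produces (z.map Symbol.terminal) v := by
  rintro ⟨r, _, hr⟩
  have := rewrites_mem_nonterminal hr
  simp only [List.mem_map] at this
  obtain ⟨a, -, ha⟩ := this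
  exact nomatch ha

inductive DerivesIn (g : ContextFreeGrammar.{0} T) :
    List (Symbol T g.NT) → List (Symbol T g.NT) → ℕ → Prop
  | refl (u : List (Symbol T g.NT)) : DerivesIn g u u 0
  | head {u v w : List (Symbol T g.NT)} {n : ℕ} :
      g.Produces u v → DerivesIn g v w n → DerivesIn g u w (n + 1)

lemma DerivesIn.toDerives {u v : List (Symbol T g.NT)} {n : ℕ} (h : DerivesIn g u v n) :
    g.Derives u v := by
  induction h with
  | refl => exact Derives.refl _
  | head p _ ih => exact p.trans_derives ih

lemma DerivesIn.tail {u v w : List (Symbol T g.NT)} {n : ℕ} (h : DerivesIn g u v n)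
    (hvw : g.Produces v w) : DerivesIn g u w (n + 1) := by
  induction h with
  | refl u => exact .head hvw (.refl _)
  | head p _ ih => exact .head p (ih hvw)

lemma derives_derivesIn {u v : List (Symbol T g.NT)} (h : g.Derives u v) :
    ∃ n, DerivesIn g u v n := by
  induction h with
  | refl => exact ⟨0, .refl u⟩
  | tail _ p ih => obtain ⟨n, hn⟩ := ih; exact ⟨n + 1, hn.tail p⟩

lemma DerivesIn.terminal_eq {z : List T} {v : List (Symbol T g.NT)} {n : ℕ}
    (h : DerivesIn g (z.map Symbol.terminal) v n) : v = z.map Symbol.terminal := by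
  cases h with
  | refl => rfl
  | head p _ => exact absurd p not_produces_terminal

lemma derives_nil_eq {v : List (Symbol T g.NT)} (h : g.Derives [] v) : v = [] := by
  obtain ⟨n, hn⟩ := derives_derivesIn h
  have : ([] : List (Symbol T g.NT)) = ([] : List T).map Symbol.terminal := rfl
  rw [this] at hn
  simpa using hn.terminal_eq

lemma DerivesIn.split : ∀ {n : ℕ} {u v w : List (Symbol T g.NT)}, DerivesIn g (u ++ v) w n →
    ∃ w₁ w₂ n₁ n₂, w = w₁ ++ w₂ ∧ n₁ + n₂ = n ∧ DerivesIn g u w₁ n₁ ∧ DerivesIn g v w₂ n₂ := by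
  intro n
  induction n with
  | zero =>
    intro u v w h
    cases h
    exact ⟨u, v, 0, 0, rfl, rfl, .refl u, .refl v⟩
  | succ n ih =>
    intro u v w h
    obtain ⟨t, ⟨r, hrg, hr⟩, ht⟩ : ∃ t, g.Produces (u ++ v) t ∧ DerivesIn g t w n := by
      cases h with | head p hd => exact ⟨_, p, hd⟩
    obtain ⟨p, q, hpq, rfl⟩ := hr.exists_parts
    rw [List.append_assoc p] at hpq
    rcases List.append_eq_append_iff.mp hpq with ⟨a, rfl, rfl⟩ | ⟨c, rfl, hc⟩
    · rw [List.append_assoc, List.append_assoc, ← List.append_assoc a] at ht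
      obtain ⟨w₁, w₂, n₁, n₂, rfl, hn, h₁, h₂⟩ := ih ht
      refine ⟨w₁, w₂, n₁, n₂ + 1, rfl, by omega, h₁, .head ⟨r, hrg, ?_⟩ h₂⟩
      rw [← List.append_assoc]
      exact ContextFreeRule.rewrites_of_exists_parts r a q
    · cases c with
      | nil =>
        simp only [List.nil_append] at hc
        subst hc
        rw [List.append_nil] at *
        rw [List.append_assoc] at ht
        obtain ⟨w₁, w₂, n₁, n₂, rfl, hn, h₁, h₂⟩ := ih ht
        refine ⟨w₁, w₂, n₁, n₂ + 1, rfl, by omega, h₁, .head ⟨r, hrg, ?_⟩ h₂⟩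
        simpa using ContextFreeRule.rewrites_of_exists_parts r [] q
      | cons s c =>
        simp only [List.cons_append, List.cons.injEq] at hc
        obtain ⟨rfl, rfl⟩ := hc
        rw [← List.append_assoc] at ht
        obtain ⟨w₁, w₂, n₁, n₂, rfl, hn, h₁, h₂⟩ := ih ht
        refine ⟨w₁, w₂, n₁ + 1, n₂, rfl, by omega, .head ⟨r, hrg, ?_⟩ h₁, h₂⟩
        have := ContextFreeRule.rewrites_of_exists_parts r p c
        simpa using this

lemma splitTerm : ∀ (γ : List (Symbol T g.NT)) {z : List T} {n : ℕ},
    DerivesIn g γ (z.map Symbol.terminal) n →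
    ∃ ps : List (Symbol T g.NT × List T),
      ps.map Prod.fst = γ ∧ (ps.map Prod.snd).flatten = z ∧
      ∀ p ∈ ps, ∃ k ≤ n, DerivesIn g [p.1] (p.2.map Symbol.terminal) k := by
  intro γ
  induction γ with
  | nil =>
    intro z n h
    have h0 : DerivesIn g (([] : List T).map Symbol.terminal) (z.map Symbol.terminal) n := h
    have := h0.terminal_eq
    have hz : z = [] := by simpa using this.symm
    exact ⟨[], rfl, by simp [hz], by simp⟩
  | cons s γ ih =>
    intro z n h
    have h' : DerivesIn g ([s] ++ γ) (z.map Symbol.terminal) n := h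
    obtain ⟨w₁, w₂, n₁, n₂, hw, hn, h₁, h₂⟩ := h'.split
    obtain ⟨z₁, z₂, rfl, rfl, rfl⟩ := List.map_eq_append_iff.mp hw
    obtain ⟨ps, hfst, hsnd, hall⟩ := ih h₂
    refine ⟨(s, z₁) :: ps, by simp [hfst], by simp [hsnd], ?_⟩
    intro p hp
    rcases List.mem_cons.mp hp with rfl | hp
    · exact ⟨n₁, by omega, h₁⟩
    · obtain ⟨k, hk, hd⟩ := hall p hp
      exact ⟨k, by omega, hd⟩

lemma derives_flatten : ∀ (ps : List (Symbol T g.NT × List T)),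
    (∀ p ∈ ps, g.Derives [p.1] (p.2.map Symbol.terminal)) →
    g.Derives (ps.map Prod.fst) (((ps.map Prod.snd).flatten).map Symbol.terminal) := by
  intro ps
  induction ps with
  | nil => intro _; exact Derives.refl _
  | cons p ps ih =>
    intro h
    have h1 : g.Derives [p.1] (p.2.map Symbol.terminal) := h p (by simp)
    have h2 := ih (fun q hq => h q (by simp [hq]))
    have := (h1.append_right (ps.map Prod.fst)).trans
      (h2.append_left (p.2.map Symbol.terminal))
    simpa using this

lemma trim {α : Type} (len : α → ℕ) {m : ℕ} : ∀ (l : List α), (∀ a ∈ l, len a ≤ m) →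
    m < (l.map len).sum →
    ∃ l₁ l₂ l₃ : List α, l = l₁ ++ l₂ ++ l₃ ∧ m < 2 * (l₂.map len).sum ∧
      (l₂.map len).sum ≤ m := by
  intro l
  induction l with
  | nil => intro _ h; simp at h
  | cons a l ih =>
    intro hle hsum
    by_cases hl : m < (l.map len).sum
    · obtain ⟨l₁, l₂, l₃, rfl, h1, h2⟩ := ih (fun b hb => hle b (by simp [hb])) hl
      exact ⟨a :: l₁, l₂, l₃, by simp, h1, h2⟩
    · push_neg at hl
      by_cases ha : m < 2 * len a
      · exact ⟨[], [a], l, by simp, by simpa using ha, by simpa using hle a (by simp)⟩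
      · refine ⟨[a], l, [], by simp, ?_, hl⟩
        simp only [List.map_cons, List.sum_cons] at hsum
        omega

noncomputable def ruleChunks (g : ContextFreeGrammar.{0} T) : Finset (List (Symbol T g.NT)) :=
  @Finset.biUnion _ _ (Classical.decEq _) g.rules
    (fun r => @List.toFinset _ (Classical.decEq _) ((r.output.tails.map List.inits).flatten))

lemma mem_ruleChunks {r : ContextFreeRule T g.NT} (hr : r ∈ g.rules)
    {ch : List (Symbol T g.NT)} (h : ch <:+: r.output) : ch ∈ ruleChunks g := by
  obtain ⟨s, t, hst⟩ := h
  unfold ruleChunks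
  simp only [Finset.mem_biUnion, List.mem_toFinset, List.mem_flatten, List.mem_map]
  exact ⟨r, hr, List.inits (ch ++ t), ⟨ch ++ t, (List.mem_tails _ _).mpr ⟨s, by rw [← hst]; simp⟩,
    rfl⟩, (List.mem_inits _ _).mpr ⟨t, rfl⟩⟩

lemma DerivesIn.zero_eq {u v : List (Symbol T g.NT)} (h : DerivesIn g u v 0) : u = v := by
  cases h; rfl

lemma DerivesIn.succ_inv {u w : List (Symbol T g.NT)} {n : ℕ} (h : DerivesIn g u w (n + 1)) :
    ∃ v, g.Produces u v ∧ DerivesIn g v w n := by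
  cases h with | head p d => exact ⟨_, p, d⟩

lemma rewrites_singleton {N : Type} {r : ContextFreeRule T N} {B : N} {v : List (Symbol T N)}
    (h : r.Rewrites [Symbol.nonterminal B] v) : B = r.input ∧ v = r.output := by
  obtain ⟨p, q, hpq, rfl⟩ := h.exists_parts
  have hl := congrArg List.length hpq
  simp only [List.length_append, List.length_cons, List.length_nil] at hl
  have hp : p = [] := List.eq_nil_of_length_eq_zero (by omega)
  have hq : q = [] := List.eq_nil_of_length_eq_zero (by omega)
  subst hp; subst hq
  simp only [List.nil_append, List.append_nil] at hpq ⊢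
  exact ⟨by simpa using hpq, trivial⟩

lemma derives_middle (ps₁ ps₂ : List (Symbol T g.NT × List T)) (mid : List (Symbol T g.NT))
    (h₁ : ∀ p ∈ ps₁, g.Derives [p.1] (p.2.map Symbol.terminal))
    (h₂ : ∀ p ∈ ps₂, g.Derives [p.1] (p.2.map Symbol.terminal)) :
    g.Derives (ps₁.map Prod.fst ++ mid ++ ps₂.map Prod.fst)
      (((ps₁.map Prod.snd).flatten).map Symbol.terminal ++ mid ++
       ((ps₂.map Prod.snd).flatten).map Symbol.terminal) := by
  have D1 := derives_flatten ps₁ h₁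
  have D2 := derives_flatten ps₂ h₂
  have step1 := D1.append_right (mid ++ ps₂.map Prod.fst)
  have step2 := D2.append_left ((((ps₁.map Prod.snd).flatten).map Symbol.terminal) ++ mid)
  simp only [List.append_assoc] at step1 step2 ⊢
  exact step1.trans step2

lemma key : ∀ (n : ℕ) (γ : List (Symbol T g.NT)) (z : List T) (m : ℕ),
    DerivesIn g γ (z.map Symbol.terminal) n → 2 ≤ m → m < z.length →
    ∃ (ch : List (Symbol T g.NT)) (w x y : List T),
      z = w ++ x ++ y ∧ m < 2 * x.length ∧ x.length ≤ m ∧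
      (ch ∈ ruleChunks g ∨ ch <:+: γ) ∧
      g.Derives γ (w.map Symbol.terminal ++ ch ++ y.map Symbol.terminal) ∧
      g.Derives ch (x.map Symbol.terminal) := by
  intro n
  induction n using Nat.strong_induction_on with
  | _ n IH =>
  intro γ z m h hm2 hmz
  obtain ⟨ps, hfst, hsnd, hall⟩ := splitTerm γ h
  by_cases hbig : ∃ p ∈ ps, m < p.2.length
  · obtain ⟨p, hpmem, hplen⟩ := hbig
    obtain ⟨ps₁, ps₂, hps⟩ := List.append_of_mem hpmem
    obtain ⟨k, hk, hd⟩ := hall p hpmem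
    obtain ⟨B, hB⟩ : ∃ B, p.1 = Symbol.nonterminal B := by
      cases hp1 : p.1 with
      | terminal t =>
        rw [hp1] at hd
        have h0 : DerivesIn g (([t] : List T).map Symbol.terminal)
            (p.2.map Symbol.terminal) k := by simpa using hd
        have h1 := h0.terminal_eq
        have h2 := congrArg List.length h1
        simp only [List.length_map, List.length_cons, List.length_nil] at h2
        omega
      | nonterminal B => exact ⟨B, rfl⟩
    rw [hB] at hd
    rcases k with - | k'
    · have := hd.zero_eq
      have h2 := congrArg List.length this
      simp only [List.length_map, List.length_cons, List.length_nil] at h2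
      omega
    · obtain ⟨t0, ⟨r, hrg, hr⟩, hrest⟩ := hd.succ_inv
      obtain ⟨hBr, rfl⟩ := rewrites_singleton hr
      obtain ⟨ch, w', x, y', hzdec, hx1, hx2, hch, hder1, hder2⟩ :=
        IH k' (by omega) r.output p.2 m hrest hm2 hplen
      have hchR : ch ∈ ruleChunks g := by
        rcases hch with hch | hch
        · exact hch
        · exact mem_ruleChunks hrg hch
      refine ⟨ch, (ps₁.map Prod.snd).flatten ++ w', x, y' ++ (ps₂.map Prod.snd).flatten,
        ?_, hx1, hx2, Or.inl hchR, ?_, hder2⟩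
      · rw [← hsnd, hps]
        simp [hzdec]
      · have hmid := derives_middle ps₁ ps₂ [Symbol.nonterminal B]
          (fun q hq => ((hall q (by rw [hps]; simp [hq])).choose_spec.2).toDerives)
          (fun q hq => ((hall q (by rw [hps]; simp [hq])).choose_spec.2).toDerives)
        have hγ : γ = ps₁.map Prod.fst ++ [Symbol.nonterminal B] ++ ps₂.map Prod.fst := by
          rw [← hfst, hps]
          simp [hB]
        have hstep : g.Derives [Symbol.nonterminal B]
            (w'.map Symbol.terminal ++ ch ++ y'.map Symbol.terminal) := by
          refine Produces.trans_derives ⟨r, hrg, ?_⟩ hder1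
          rw [hBr]
          exact ContextFreeRule.Rewrites.input_output
        have hstep2 := (hstep.append_left
          (((ps₁.map Prod.snd).flatten).map Symbol.terminal)).append_right
          (((ps₂.map Prod.snd).flatten).map Symbol.terminal)
        have := hmid.trans hstep2
        rw [hγ]
        simp only [List.map_append, List.append_assoc] at this ⊢
        exact this
  · push_neg at hbig
    have htot : m < (ps.map (fun p => p.2.length)).sum := by
      have : z.length = (ps.map (fun p => p.2.length)).sum := by
        rw [← hsnd, List.length_flatten, List.map_map]
        rfl
      omega
    obtain ⟨ps₁, ps₂, ps₃, hps, h1, h2⟩ := trim (fun p => p.2.length) ps hbig htot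
    have hx : ((ps₂.map Prod.snd).flatten).length = (ps₂.map (fun p => p.2.length)).sum := by
      rw [List.length_flatten, List.map_map]
      rfl
    refine ⟨ps₂.map Prod.fst, (ps₁.map Prod.snd).flatten, (ps₂.map Prod.snd).flatten,
      (ps₃.map Prod.snd).flatten, ?_, by omega, by omega, Or.inr ?_, ?_, ?_⟩
    · rw [← hsnd, hps]; simp
    · rw [← hfst, hps]
      exact ⟨ps₁.map Prod.fst, ps₃.map Prod.fst, by simp⟩
    · have hmid := derives_middle ps₁ ps₃ (ps₂.map Prod.fst)
        (fun q hq => ((hall q (by rw [hps]; simp [hq])).choose_spec.2).toDerives)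
        (fun q hq => ((hall q (by rw [hps]; simp [hq])).choose_spec.2).toDerives)
      rw [← hfst, hps]
      simp only [List.map_append, List.append_assoc] at hmid ⊢
      exact hmid
    · exact derives_flatten ps₂
        (fun q hq => ((hall q (by rw [hps]; simp [hq])).choose_spec.2).toDerives)

noncomputable def chunks (g : ContextFreeGrammar.{0} T) : Finset (List (Symbol T g.NT)) :=
  @insert _ _ (@Finset.instInsert _ (Classical.decEq _))
    [Symbol.nonterminal g.initial] (ruleChunks g)

lemma initial_mem_chunks : [Symbol.nonterminal g.initial] ∈ chunks g := by
  unfold chunks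
  exact @Finset.mem_insert_self _ (Classical.decEq _) _ _

lemma mem_chunks_of_ruleChunks {ch : List (Symbol T g.NT)} (h : ch ∈ ruleChunks g) :
    ch ∈ chunks g := by
  unfold chunks
  exact @Finset.mem_insert_of_mem _ (Classical.decEq _) _ _ _ h

lemma topkey {z : List T} {m : ℕ}
    (h : g.Derives [Symbol.nonterminal g.initial] (z.map Symbol.terminal))
    (hm2 : 2 ≤ m) (hmz : m ≤ z.length) :
    ∃ (ch : List (Symbol T g.NT)) (w x y : List T),
      z = w ++ x ++ y ∧ m < 2 * x.length ∧ x.length ≤ m ∧ ch ∈ chunks g ∧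
      g.Derives [Symbol.nonterminal g.initial]
        (w.map Symbol.terminal ++ ch ++ y.map Symbol.terminal) ∧
      g.Derives ch (x.map Symbol.terminal) := by
  rcases eq_or_lt_of_le hmz with heq | hlt
  · exact ⟨[Symbol.nonterminal g.initial], [], z, [], by simp, by omega, by omega,
      initial_mem_chunks, by simpa using Derives.refl _, by simpa using h⟩
  · obtain ⟨n, hn⟩ := derives_derivesIn h
    obtain ⟨ch, w, x, y, hz, h1, h2, hch, hd1, hd2⟩ := key n _ z m hn hm2 hlt
    refine ⟨ch, w, x, y, hz, h1, h2, ?_, hd1, hd2⟩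
    rcases hch with hch | hch
    · exact mem_chunks_of_ruleChunks hch
    · rcases List.sublist_singleton.mp hch.sublist with rfl | rfl
      · exfalso
        have hx := derives_nil_eq hd2
        have := congrArg List.length hx
        simp only [List.length_map, List.length_nil] at this
        omega
      · exact initial_mem_chunks

end InterchangeAux

open InterchangeAux in
/-- The interchange lemma for context-free languages (Ogden–Ross–Winklmann): for each
context-free `L` there is `c > 0` such that for all `n ≥ 2`, every set `R` of words of
`L` of length `n`, and every `m` with `2 ≤ m ≤ n`, there are `k ≥ |R|/(c(n+1)²)` words
`z 0, …, z (k-1)` of `R` (pairwise distinct), with decompositions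
`z i = w i ++ x i ++ y i` such that the `w i` have equal lengths, the `y i` have equal
lengths, the `x i` have equal lengths in the interval `(m/2, m]`, and all interchanges
`w i ++ x j ++ y i` belong to `L`. -/
theorem interchange_lemma {σ : Type} [Fintype σ] (L : Language σ)
    (hL : L.IsContextFree) :
    ∃ c : ℕ, 0 < c ∧ ∀ n : ℕ, 2 ≤ n → ∀ R : Finset (List σ),
      (∀ z ∈ R, z ∈ L ∧ z.length = n) → ∀ m : ℕ, 2 ≤ m → m ≤ n →
      ∃ (k : ℕ) (z w x y : Fin k → List σ),
        (R.card : ℚ) / ((c : ℚ) * ((n : ℚ) + 1) ^ 2) ≤ (k : ℚ) ∧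
        Function.Injective z ∧
        (∀ i, z i ∈ R) ∧
        (∀ i, z i = w i ++ x i ++ y i) ∧
        (∀ i j, (w i).length = (w j).length) ∧
        (∀ i j, (y i).length = (y j).length) ∧
        (∀ i j, (x i).length = (x j).length) ∧
        (∀ i, m < 2 * (x i).length ∧ (x i).length ≤ m) ∧
        (∀ i j, w i ++ x j ++ y i ∈ L) := by
  classical
  obtain ⟨g, rfl⟩ := hL
  refine ⟨(chunks g).card, Finset.card_pos.mpr ⟨_, initial_mem_chunks⟩, ?_⟩
  intro n hn R hR m hm2 hmn
  have Hex : ∀ z : List σ, ∃ (ch : List (Symbol σ g.NT)) (w x y : List σ),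
      z ∈ R → (z = w ++ x ++ y ∧ m < 2 * x.length ∧ x.length ≤ m ∧ ch ∈ chunks g ∧
        g.Derives [Symbol.nonterminal g.initial]
          (w.map Symbol.terminal ++ ch ++ y.map Symbol.terminal) ∧
        g.Derives ch (x.map Symbol.terminal)) := by
    intro z
    by_cases hz : z ∈ R
    · obtain ⟨hzL, hzn⟩ := hR z hz
      have hd : g.Derives [Symbol.nonterminal g.initial] (z.map Symbol.terminal) :=
        (g.mem_language_iff z).mp hzL
      obtain ⟨ch, w, x, y, hcon⟩ := topkey hd hm2 (by rw [hzn]; exact hmn)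
      exact ⟨ch, w, x, y, fun _ => hcon⟩
    · exact ⟨[], [], [], [], fun h => absurd h hz⟩
  choose ch wf xf yf hdata using Hex
  set t := (chunks g) ×ˢ (Finset.range (n + 1) ×ˢ Finset.range (n + 1)) with ht
  set f : List σ → List (Symbol σ g.NT) × (ℕ × ℕ) :=
    fun z => (ch z, (wf z).length, (xf z).length) with hf
  have hmaps : ∀ z ∈ R, f z ∈ t := by
    intro z hz
    obtain ⟨hdec, hx1, hx2, hchm, -, -⟩ := hdata z hz
    obtain ⟨-, hzn⟩ := hR z hz
    have hlen := congrArg List.length hdec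
    simp only [List.length_append] at hlen
    simp only [ht, hf, Finset.mem_product, Finset.mem_range]
    exact ⟨hchm, by omega, by omega⟩
  have htne : t.Nonempty := ⟨([Symbol.nonterminal g.initial], 0, 0), by
    simp only [ht, Finset.mem_product, Finset.mem_range]
    exact ⟨initial_mem_chunks, by omega, by omega⟩⟩
  obtain ⟨b₀, hb₀t, hb₀max⟩ := Finset.exists_max_image t
    (fun b => (R.filter (fun z => f z = b)).card) htne
  set F := R.filter (fun z => f z = b₀) with hF
  have hcard : R.card ≤ t.card * F.card := by
    rw [Finset.card_eq_sum_card_fiberwise hmaps]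
    calc ∑ b ∈ t, (R.filter (fun z => f z = b)).card
        ≤ ∑ _b ∈ t, F.card := Finset.sum_le_sum (fun b hb => hb₀max b hb)
      _ = t.card * F.card := by rw [Finset.sum_const, smul_eq_mul]
  have htcard : t.card = (chunks g).card * ((n + 1) * (n + 1)) := by
    rw [ht, Finset.card_product, Finset.card_product, Finset.card_range]
  -- fiber members
  have hFmem : ∀ u ∈ F, u ∈ R ∧ f u = b₀ := by
    intro u hu
    exact ⟨(Finset.mem_filter.mp hu).1, (Finset.mem_filter.mp hu).2⟩
  refine ⟨F.card, fun i => (F.equivFin.symm i : List σ),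
    fun i => wf (F.equivFin.symm i : List σ),
    fun i => xf (F.equivFin.symm i : List σ),
    fun i => yf (F.equivFin.symm i : List σ), ?_, ?_, ?_, ?_, ?_, ?_, ?_, ?_, ?_⟩
  · -- cardinality bound
    have hc1 : 0 < (chunks g).card := Finset.card_pos.mpr ⟨_, initial_mem_chunks⟩
    rw [div_le_iff₀ (by positivity)]
    have h' : (R.card : ℚ) ≤ ((chunks g).card * ((n + 1) * (n + 1)) * F.card : ℕ) := by
      exact_mod_cast htcard ▸ hcard
    push_cast at h'
    nlinarith [h']
  · intro i j hij
    have := Subtype.coe_injective hij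
    exact F.equivFin.symm.injective this
  · intro i
    exact (hFmem _ (F.equivFin.symm i).2).1
  · intro i
    exact (hdata _ (hFmem _ (F.equivFin.symm i).2).1).1
  · intro i j
    have hi := (hFmem _ (F.equivFin.symm i).2).2
    have hj := (hFmem _ (F.equivFin.symm j).2).2
    have := congrArg (fun b => b.2.1) (hi.trans hj.symm)
    simpa [hf] using this
  · intro i j
    beta_reduce
    have hi := hdata _ (hFmem _ (F.equivFin.symm i).2).1
    have hj := hdata _ (hFmem _ (F.equivFin.symm j).2).1
    have hni : ((F.equivFin.symm i : List σ)).length = n :=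
      (hR _ (hFmem _ (F.equivFin.symm i).2).1).2
    have hnj : ((F.equivFin.symm j : List σ)).length = n :=
      (hR _ (hFmem _ (F.equivFin.symm j).2).1).2
    have heqi := congrArg List.length hi.1
    have heqj := congrArg List.length hj.1
    simp only [List.length_append] at heqi heqj
    have hfi := (hFmem _ (F.equivFin.symm i).2).2
    have hfj := (hFmem _ (F.equivFin.symm j).2).2
    have hw := congrArg (fun b => b.2.1) (hfi.trans hfj.symm)
    have hx := congrArg (fun b => b.2.2) (hfi.trans hfj.symm)
    simp only [hf] at hw hx
    omega
  · intro i j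
    have hfi := (hFmem _ (F.equivFin.symm i).2).2
    have hfj := (hFmem _ (F.equivFin.symm j).2).2
    have := congrArg (fun b => b.2.2) (hfi.trans hfj.symm)
    simpa [hf] using this
  · intro i
    have hi := hdata _ (hFmem _ (F.equivFin.symm i).2).1
    exact ⟨hi.2.1, hi.2.2.1⟩
  · intro i j
    have hi := hdata _ (hFmem _ (F.equivFin.symm i).2).1
    have hj := hdata _ (hFmem _ (F.equivFin.symm j).2).1
    have hfi := (hFmem _ (F.equivFin.symm i).2).2
    have hfj := (hFmem _ (F.equivFin.symm j).2).2
    have hcheq : ch (F.equivFin.symm i : List σ) = ch (F.equivFin.symm j : List σ) := by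
      have := congrArg (fun b => b.1) (hfi.trans hfj.symm)
      simpa [hf] using this
    have hd1 := hi.2.2.2.2.1
    have hd2 := hj.2.2.2.2.2
    rw [← hcheq] at hd2
    have hmidd := (hd2.append_left
      ((wf (F.equivFin.symm i : List σ)).map Symbol.terminal)).append_right
      ((yf (F.equivFin.symm i : List σ)).map Symbol.terminal)
    have := hd1.trans hmidd
    rw [ContextFreeGrammar.mem_language_iff]
    simpa [List.map_append] using this
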